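/- Given u = (u1,u2,u3) ∈ ℝ³, the three eigenvalues of the symmetric traceless 3×3 matrix Q[u] := u1 (e_ρ⊗e_ρ - (1/2)I₂) + (√3/2) u2 (e_z⊗e_z - (1/3)I₃) + (1/2) u3 (e_ρ⊗e_z + e_z⊗e_ρ) are λ1 = -(1/2)(u1 + u2/√3), λ± = (1/4)[(u1 + u2/√3) ± √((u1 - √3 u2)² + 4 u3²)], where e_ρ, e_θ, e_z is an orthonormal basis, I₂ = e_ρ⊗e_ρ + e_θ⊗e_θ, and I₃ is the identity. -/
import Mathlib


open Matrix Polynomial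

/-- The eigenvalues of Q[u] = u1(e_ρ⊗e_ρ - ½I₂) + (√3/2)u2 M2 + (1/2)u3 M3 are
    λ1 = -(1/2)(u1 + u2/√3) and λ± = (1/4)[(u1 + u2/√3) ± √((u1-√3u2)² + 4u3²)]. -/
theorem eigenvalues_of_Q (u1 u2 u3 : ℝ)
    (eρ ez : Fin 3 → ℝ) (heρ : eρ = ![1, 0, 0]) (hez : ez = ![0, 0, 1])
    (I2 M2 M3 Q : Matrix (Fin 3) (Fin 3) ℝ)
    (hI2 : I2 = Matrix.diagonal ![1, 1, 0])
    (hM2 : M2 = vecMulVec ez ez - (1 / 3 : ℝ) • (1 : Matrix (Fin 3) (Fin 3) ℝ))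
    (hM3 : M3 = vecMulVec eρ ez + vecMulVec ez eρ)
    (hQ : Q = u1 • (vecMulVec eρ eρ - (1 / 2 : ℝ) • I2)
        + (Real.sqrt 3 / 2 * u2) • M2 + (u3 / 2) • M3) :
    Q.charpoly =
      (X - C (-(1 / 2) * (u1 + u2 / Real.sqrt 3))) *
      (X - C ((1 / 4) * ((u1 + u2 / Real.sqrt 3)
          + Real.sqrt ((u1 - Real.sqrt 3 * u2) ^ 2 + 4 * u3 ^ 2)))) *
      (X - C ((1 / 4) * ((u1 + u2 / Real.sqrt 3)
          - Real.sqrt ((u1 - Real.sqrt 3 * u2) ^ 2 + 4 * u3 ^ 2)))) := by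
  have h3 : Real.sqrt 3 ^ 2 = 3 := Real.sq_sqrt (by norm_num)
  have ha : Real.sqrt 3 ≠ 0 := by positivity
  set a := Real.sqrt 3 with hadef
  set b := Real.sqrt ((u1 - a * u2) ^ 2 + 4 * u3 ^ 2) with hbdef
  have hb : b ^ 2 = (u1 - a * u2) ^ 2 + 4 * u3 ^ 2 := Real.sq_sqrt (by positivity)
  have hQ' : Q = !![u1/2 - a*u2/6, 0, u3/2; 0, -(u1/2) - a*u2/6, 0; u3/2, 0, a*u2/3] := by
    subst heρ hez hI2 hM2 hM3 hQ
    ext i j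
    fin_cases i <;> fin_cases j <;>
      simp [vecMulVec_apply, Matrix.one_apply] <;> ring
  rw [hQ', Matrix.charpoly, Matrix.det_fin_three]
  simp only [charmatrix_apply_eq, charmatrix_apply_ne, Matrix.cons_val', Matrix.cons_val_zero,
    Matrix.cons_val_one, Matrix.head_cons, Matrix.empty_val', Matrix.cons_val_fin_one,
    Matrix.head_fin_const, Matrix.of_apply, Matrix.cons_val_two, Matrix.tail_cons,
    ne_eq, Fin.reduceEq, not_false_eq_true, map_zero]
  have hdiv : u2 / a = a * u2 / 3 := by
    rw [div_eq_div_iff ha (by norm_num)]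
    linear_combination (-u2) * h3
  have hb' : b ^ 2 = u1^2 - 2*a*u1*u2 + 3*u2^2 + 4*u3^2 := by
    rw [hb]; linear_combination u2^2 * h3
  have hsum : ((1:ℝ)/4) * ((u1 + u2 / a) + b) + (1/4) * ((u1 + u2 / a) - b)
      = (u1/2 - a*u2/6) + a*u2/3 := by rw [hdiv]; ring
  have hprod : ((1:ℝ)/4) * ((u1 + u2 / a) + b) * ((1/4) * ((u1 + u2 / a) - b))
      = (u1/2 - a*u2/6) * (a*u2/3) - (u3/2) * (u3/2) := by
    have e : ((1:ℝ)/4) * ((u1 + u2 / a) + b) * ((1/4) * ((u1 + u2 / a) - b))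
        = ((u1 + u2/a)^2 - b^2) / 16 := by ring
    rw [e, hb', hdiv]
    linear_combination (u2^2/16) * h3
  have h1 : (C (u1/2 - a*u2/6) + C (a*u2/3) : ℝ[X])
      = C ((1/4) * ((u1 + u2 / a) + b)) + C ((1/4) * ((u1 + u2 / a) - b)) := by
    rw [← C_add, ← C_add, hsum]
  have h2 : (C (u1/2 - a*u2/6) * C (a*u2/3) - C (u3/2) * C (u3/2) : ℝ[X])
      = C ((1/4) * ((u1 + u2 / a) + b)) * C ((1/4) * ((u1 + u2 / a) - b)) := by
    rw [← C_mul, ← C_mul, ← C_sub, ← C_mul, hprod]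
  have h0 : (C (-(u1/2) - a*u2/6) : ℝ[X]) = C (-(1/2) * (u1 + u2 / a)) := by
    rw [hdiv]; ring_nf
  have key : (X - C (u1/2 - a*u2/6)) * (X - C (a*u2/3)) - C (u3/2) * C (u3/2)
      = (X - C ((1/4) * ((u1 + u2/a) + b))) * (X - C ((1/4) * ((u1 + u2/a) - b))) := by
    linear_combination (-X) * h1 + h2
  linear_combination (X - C (-(u1/2) - a*u2/6)) * key
    - ((X - C ((1/4) * ((u1 + u2/a) + b))) * (X - C ((1/4) * ((u1 + u2/a) - b)))) * h0
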